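/- Let 0<β<1, let φ be integrable on (0,∞) and let ξ be measurable on (0,∞) with ‖ξ‖_{L_1^{0,β}} = ∫₀^∞ |ξ(v)| K₀(βv) dv < ∞. Define f = (φ ∗_{F_s,F_c} √(π/2)·e^{−·}) ⋆ ξ. Then f is integrable on (0,∞) and ‖f‖_{L_1(0,∞)} ≤ 4·‖φ‖_{L_1(0,∞)}·‖ξ‖_{L_1^{0,β}}. -/

import Mathlib

open MeasureTheory Real Set
open ENNReal
set_option maxHeartbeats 1000000

/-- The kernel function φ(x,u,v). -/
noncomputable def phiKer (x u v : ℝ) : ℝ :=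
  Real.exp (-v * Real.cosh (x + u - 1)) + Real.exp (-v * Real.cosh (x - u + 1))
    - Real.exp (-v * Real.cosh (x + u + 1)) - Real.exp (-v * Real.cosh (x - u - 1))

/-- The modified Bessel function of the second kind of order zero. -/
noncomputable def K0 (v : ℝ) : ℝ := ∫ t in Set.Ioi (0 : ℝ), Real.exp (-v * Real.cosh t)

/-- The trigonometric-weighted generalized convolution (f ⋆ g). -/
noncomputable def gconv (f g : ℝ → ℝ) (x : ℝ) : ℝ :=
  (1 / 4) * ∫ v in Set.Ioi (0 : ℝ), ∫ u in Set.Ioi (0 : ℝ), phiKer x u v * f u * g v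

/-- Fourier cosine transform. -/
noncomputable def Fc (f : ℝ → ℝ) (y : ℝ) : ℝ :=
  Real.sqrt (2 / Real.pi) * ∫ x in Set.Ioi (0 : ℝ), f x * Real.cos (x * y)

/-- Fourier sine transform. -/
noncomputable def Fs (f : ℝ → ℝ) (y : ℝ) : ℝ :=
  Real.sqrt (2 / Real.pi) * ∫ x in Set.Ioi (0 : ℝ), f x * Real.sin (x * y)

/-- Modified Bessel function K_{iy}(x). -/
noncomputable def Kiy (y x : ℝ) : ℝ :=
  ∫ u in Set.Ioi (0 : ℝ), Real.exp (-x * Real.cosh u) * Real.cos (y * u)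

/-- Kontorovich–Lebedev transform. -/
noncomputable def KL (g : ℝ → ℝ) (y : ℝ) : ℝ := ∫ x in Set.Ioi (0 : ℝ), Kiy y x * g x

/-- Fourier cosine convolution. -/
noncomputable def fcConv (f g : ℝ → ℝ) (x : ℝ) : ℝ :=
  (1 / Real.sqrt (2 * Real.pi)) * ∫ u in Set.Ioi (0 : ℝ), f u * (g |x - u| + g (x + u))

/-- Fourier sine–cosine generalized convolution. -/
noncomputable def fscConv (f g : ℝ → ℝ) (x : ℝ) : ℝ :=
  (1 / Real.sqrt (2 * Real.pi)) * ∫ u in Set.Ioi (0 : ℝ), f u * (g |x - u| - g (x + u))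



lemma le_cosh' (t : ℝ) : t ≤ Real.cosh t := by
  rw [Real.cosh_eq]
  have h1 : Real.exp t = Real.exp (t/2) * Real.exp (t/2) := by
    rw [← Real.exp_add]; ring_nf
  have h3 := Real.exp_pos (-t)
  nlinarith [Real.add_one_le_exp (t/2), sq_nonneg (t/2 - 1),
    sq_nonneg (Real.exp (t/2) - 1 - t/2)]

lemma contCosh (v : ℝ) : Continuous fun t : ℝ => Real.exp (-v * Real.cosh t) :=
  Real.continuous_exp.comp (continuous_const.mul Real.continuous_cosh)

lemma coshInt {v : ℝ} (hv : 0 < v) :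
    IntegrableOn (fun t => Real.exp (-v * Real.cosh t)) (Ioi 0) := by
  refine (exp_neg_integrableOn_Ioi 0 hv).mono' (contCosh v).aestronglyMeasurable.restrict ?_
  filter_upwards [ae_restrict_mem measurableSet_Ioi] with t ht
  rw [Real.norm_eq_abs, abs_of_pos (Real.exp_pos _)]
  exact Real.exp_le_exp.2 (by nlinarith [le_cosh' t])

lemma K0_nonneg (v : ℝ) : 0 ≤ K0 v :=
  setIntegral_nonneg measurableSet_Ioi fun t _ => (Real.exp_pos _).le

lemma K0_mono {β v : ℝ} (hβ : 0 < β) (hβ1 : β ≤ 1) (hv : 0 < v) : K0 v ≤ K0 (β * v) := by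
  refine setIntegral_mono_on (coshInt hv) (coshInt (by positivity)) measurableSet_Ioi ?_
  intro t _
  refine Real.exp_le_exp.2 ?_
  have hc : (0:ℝ) < Real.cosh t := Real.cosh_pos t
  nlinarith [mul_nonneg (mul_nonneg (sub_nonneg.2 hβ1) hv.le) hc.le]

lemma lint_shift_le (F : ℝ → ℝ≥0∞) (hF : Measurable F) (c : ℝ) :
    ∫⁻ x in Ioi (0:ℝ), F (x + c) ≤ ∫⁻ x, F x := by
  calc ∫⁻ x in Ioi (0:ℝ), F (x + c) ≤ ∫⁻ x, F (x + c) :=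
        lintegral_mono' Measure.restrict_le_self le_rfl
    _ = ∫⁻ x, F x := (measurePreserving_add_right volume c).lintegral_comp hF

lemma lint_even (F : ℝ → ℝ≥0∞) (he : ∀ t, F (-t) = F t) :
    ∫⁻ x, F x = 2 * ∫⁻ x in Ioi (0:ℝ), F x := by
  have hneg : ∫⁻ x in Iic (0:ℝ), F x = ∫⁻ x in Ioi (0:ℝ), F x := by
    have hmp := Measure.measurePreserving_neg (volume : Measure ℝ)
    have hemb : MeasurableEmbedding (Neg.neg : ℝ → ℝ) :=
      (Homeomorph.neg ℝ).measurableEmbedding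
    have h1 : ∫⁻ a in (Neg.neg : ℝ → ℝ) ⁻¹' (Iic (0:ℝ)), F (-a) = ∫⁻ b in Iic (0:ℝ), F b :=
      hmp.setLIntegral_comp_preimage_emb hemb F _
    have h2 : (Neg.neg : ℝ → ℝ) ⁻¹' (Iic (0:ℝ)) = Ici 0 := by ext x; simp
    rw [h2] at h1
    rw [← h1]
    simp_rw [he]
    exact setLIntegral_congr Ioi_ae_eq_Ici.symm
  have key := lintegral_add_compl (μ := (volume : Measure ℝ)) F (measurableSet_Iic (a := (0:ℝ)))
  rw [compl_Iic, hneg] at key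
  rw [← key, two_mul]

-- key: ∫⁻ x in Ioi 0, ofReal (exp (-v cosh (x+c))) ≤ ofReal (2 * K0 v)
lemma lint_exp_cosh {v : ℝ} (hv : 0 < v) (c : ℝ) :
    ∫⁻ x in Ioi (0:ℝ), ENNReal.ofReal (Real.exp (-v * Real.cosh (x + c)))
      ≤ ENNReal.ofReal (2 * K0 v) := by
  set F : ℝ → ℝ≥0∞ := fun t => ENNReal.ofReal (Real.exp (-v * Real.cosh t)) with hFdef
  have hF : Measurable F := (contCosh v).measurable.ennreal_ofReal
  have he : ∀ t, F (-t) = F t := fun t => by simp [hFdef, Real.cosh_neg]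
  calc ∫⁻ x in Ioi (0:ℝ), F (x + c) ≤ ∫⁻ x, F x := lint_shift_le F hF c
    _ = 2 * ∫⁻ x in Ioi (0:ℝ), F x := lint_even F he
    _ = 2 * ENNReal.ofReal (K0 v) := by
        rw [← ofReal_integral_eq_lintegral_ofReal (coshInt hv)
          (Filter.Eventually.of_forall fun t => (Real.exp_pos _).le)]
        rfl
    _ = ENNReal.ofReal (2 * K0 v) := by
        rw [ENNReal.ofReal_mul (by norm_num : (0:ℝ) ≤ 2)]
        norm_num

-- exp version for the g bound: ∫⁻ x in Ioi 0, ofReal (exp (-|x + c|)) ≤ 2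
lemma lint_exp_abs (c : ℝ) :
    ∫⁻ x in Ioi (0:ℝ), ENNReal.ofReal (Real.exp (-|x + c|)) ≤ 2 := by
  set F : ℝ → ℝ≥0∞ := fun t => ENNReal.ofReal (Real.exp (-|t|)) with hFdef
  have hF : Measurable F :=
    (Real.continuous_exp.comp (continuous_abs.neg)).measurable.ennreal_ofReal
  have he : ∀ t, F (-t) = F t := fun t => by simp [hFdef]
  calc ∫⁻ x in Ioi (0:ℝ), F (x + c) ≤ ∫⁻ x, F x := lint_shift_le F hF c
    _ = 2 * ∫⁻ x in Ioi (0:ℝ), F x := lint_even F he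
    _ = 2 * ENNReal.ofReal (∫ x in Ioi (0:ℝ), Real.exp (-|x|)) := by
        rw [← ofReal_integral_eq_lintegral_ofReal]
        · refine (integrableOn_congr_fun (fun x hx => ?_) measurableSet_Ioi).2
            (exp_neg_integrableOn_Ioi 0 one_pos)
          · rw [abs_of_pos hx]; ring_nf
        · exact Filter.Eventually.of_forall fun t => (Real.exp_pos _).le
    _ ≤ 2 * 1 := by
        gcongr
        rw [setIntegral_congr_fun measurableSet_Ioi (g := fun x => Real.exp (-x))
          (fun x hx => by rw [abs_of_pos hx])]
        rw [integral_exp_neg_Ioi_zero]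
        exact ENNReal.ofReal_le_one.mpr le_rfl
    _ = 2 := mul_one 2

lemma measurable_phiKer3 : Measurable fun q : (ℝ × ℝ) × ℝ => phiKer q.1.1 q.2 q.1.2 := by
  unfold phiKer
  fun_prop

lemma measurable_phiKer2v (v : ℝ) : Measurable fun q : ℝ × ℝ => phiKer q.1 q.2 v := by
  unfold phiKer
  fun_prop

lemma lint_phiKer {v : ℝ} (hv : 0 < v) (u : ℝ) :
    ∫⁻ x in Ioi (0:ℝ), ENNReal.ofReal |phiKer x u v| ≤ ENNReal.ofReal (8 * K0 v) := by
  have hK0 : 0 ≤ K0 v := setIntegral_nonneg measurableSet_Ioi fun t _ => (Real.exp_pos _).le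
  have hb : ∀ x : ℝ, ENNReal.ofReal |phiKer x u v| ≤
      ENNReal.ofReal (Real.exp (-v * Real.cosh (x + (u - 1))))
      + ENNReal.ofReal (Real.exp (-v * Real.cosh (x + (1 - u))))
      + ENNReal.ofReal (Real.exp (-v * Real.cosh (x + (u + 1))))
      + ENNReal.ofReal (Real.exp (-v * Real.cosh (x + (-u - 1)))) := by
    intro x
    have e1 : x + (u - 1) = x + u - 1 := by ring
    have e2 : x + (1 - u) = x - u + 1 := by ring
    have e3 : x + (u + 1) = x + u + 1 := by ring
    have e4 : x + (-u - 1) = x - u - 1 := by ring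
    rw [e1, e2, e3, e4, ← ENNReal.ofReal_add (Real.exp_pos _).le (Real.exp_pos _).le,
      ← ENNReal.ofReal_add (by positivity) (Real.exp_pos _).le,
      ← ENNReal.ofReal_add (by positivity) (Real.exp_pos _).le]
    refine ENNReal.ofReal_le_ofReal ?_
    unfold phiKer
    rw [abs_le]
    constructor <;> nlinarith [Real.exp_pos (-v * Real.cosh (x + u - 1)),
      Real.exp_pos (-v * Real.cosh (x - u + 1)), Real.exp_pos (-v * Real.cosh (x + u + 1)),
      Real.exp_pos (-v * Real.cosh (x - u - 1))]
  calc ∫⁻ x in Ioi (0:ℝ), ENNReal.ofReal |phiKer x u v|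
      ≤ ∫⁻ x in Ioi (0:ℝ), (ENNReal.ofReal (Real.exp (-v * Real.cosh (x + (u - 1))))
        + ENNReal.ofReal (Real.exp (-v * Real.cosh (x + (1 - u))))
        + ENNReal.ofReal (Real.exp (-v * Real.cosh (x + (u + 1))))
        + ENNReal.ofReal (Real.exp (-v * Real.cosh (x + (-u - 1))))) :=
        lintegral_mono hb
    _ ≤ ENNReal.ofReal (2 * K0 v) + ENNReal.ofReal (2 * K0 v) + ENNReal.ofReal (2 * K0 v)
        + ENNReal.ofReal (2 * K0 v) := by
        have m : ∀ c : ℝ, Measurable fun x : ℝ =>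
            ENNReal.ofReal (Real.exp (-v * Real.cosh (x + c))) := fun c =>
          ((contCosh v).comp (continuous_id.add continuous_const)).measurable.ennreal_ofReal
        rw [lintegral_add_left (by exact ((m _).add (m _) |>.add (m _))),
          lintegral_add_left (by exact ((m _).add (m _))), lintegral_add_left (m _)]
        gcongr <;> exact lint_exp_cosh hv _
    _ = ENNReal.ofReal (8 * K0 v) := by
        rw [← ENNReal.ofReal_add (by positivity) (by positivity),
          ← ENNReal.ofReal_add (by positivity) (by positivity),
          ← ENNReal.ofReal_add (by positivity) (by positivity)]
        ring_nf

lemma ofReal_abs_integral_le {α : Type*} [MeasurableSpace α] (μ : Measure α) (f : α → ℝ) :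
    ENNReal.ofReal |∫ u, f u ∂μ| ≤ ∫⁻ u, ENNReal.ofReal |f u| ∂μ := by
  rw [← Real.enorm_eq_ofReal_abs]
  simp_rw [← Real.enorm_eq_ofReal_abs]
  exact enorm_integral_le_lintegral_enorm f

lemma g_lint {Φ : ℝ → ℝ} (hΦm : Measurable Φ) (hΦ : IntegrableOn Φ (Ioi 0)) :
    ∫⁻ x in Ioi (0:ℝ),
        ENNReal.ofReal |fscConv Φ (fun t => Real.sqrt (Real.pi / 2) * Real.exp (-t)) x|
      ≤ ENNReal.ofReal 2 * ENNReal.ofReal (∫ x in Ioi (0:ℝ), |Φ x|) := by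
  set c1 : ℝ≥0∞ := ENNReal.ofReal (1 / Real.sqrt (2 * Real.pi)) with hc1
  set c2 : ℝ≥0∞ := ENNReal.ofReal (Real.sqrt (Real.pi / 2)) with hc2
  -- the ennreal kernel
  set E : ℝ → ℝ → ℝ≥0∞ := fun x u =>
    ENNReal.ofReal |Φ u| * (ENNReal.ofReal (Real.exp (-|x - u|))
      + ENNReal.ofReal (Real.exp (-(x + u)))) with hE
  have step1 : ∀ x : ℝ,
      ENNReal.ofReal |fscConv Φ (fun t => Real.sqrt (Real.pi / 2) * Real.exp (-t)) x|
        ≤ c1 * c2 * ∫⁻ u in Ioi (0:ℝ), E x u := by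
    intro x
    unfold fscConv
    rw [abs_mul, ENNReal.ofReal_mul (by positivity)]
    have h0 : |1 / Real.sqrt (2 * Real.pi)| = 1 / Real.sqrt (2 * Real.pi) :=
      abs_of_nonneg (by positivity)
    rw [h0]
    rw [mul_assoc]
    refine mul_le_mul_right ?_ c1
    refine le_trans (ofReal_abs_integral_le _ _) ?_
    rw [← lintegral_const_mul' c2 _ (by simp [hc2])]
    refine lintegral_mono fun u => ?_
    rw [hE]
    have hle : |Φ u * (Real.sqrt (Real.pi / 2) * Real.exp (-|x - u|)
        - Real.sqrt (Real.pi / 2) * Real.exp (-(x + u)))|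
        ≤ |Φ u| * (Real.sqrt (Real.pi / 2) * (Real.exp (-|x - u|) + Real.exp (-(x + u)))) := by
      rw [abs_mul]
      refine mul_le_mul_of_nonneg_left ?_ (abs_nonneg _)
      rw [← mul_sub]
      rw [abs_mul, abs_of_nonneg (Real.sqrt_nonneg _)]
      refine mul_le_mul_of_nonneg_left ?_ (Real.sqrt_nonneg _)
      refine (abs_sub _ _).trans ?_
      rw [abs_of_pos (Real.exp_pos _), abs_of_pos (Real.exp_pos _)]
    refine le_trans (ENNReal.ofReal_le_ofReal hle) ?_
    rw [ENNReal.ofReal_mul (abs_nonneg _), ENNReal.ofReal_mul (Real.sqrt_nonneg _),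
      ENNReal.ofReal_add (Real.exp_pos _).le (Real.exp_pos _).le]
    exact le_of_eq (by ring)
  -- measurability of E
  have hEmeas : Measurable (Function.uncurry E) := by
    rw [hE]
    fun_prop
  have step2 : ∀ u ∈ Ioi (0:ℝ), ∫⁻ x in Ioi (0:ℝ), E x u ≤ ENNReal.ofReal |Φ u| * 4 := by
    intro u hu
    rw [hE]
    simp only
    rw [lintegral_const_mul' _ _ (by simp)]
    refine mul_le_mul_right ?_ _
    have m1 : Measurable fun x : ℝ => ENNReal.ofReal (Real.exp (-|x - u|)) := by fun_prop
    have m2 : Measurable fun x : ℝ => ENNReal.ofReal (Real.exp (-(x + u))) := by fun_prop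
    rw [lintegral_add_left m1]
    have b1 : ∫⁻ x in Ioi (0:ℝ), ENNReal.ofReal (Real.exp (-|x - u|)) ≤ 2 := by
      have := lint_exp_abs (-u)
      simpa [sub_eq_add_neg] using this
    have b2 : ∫⁻ x in Ioi (0:ℝ), ENNReal.ofReal (Real.exp (-(x + u))) ≤ 2 := by
      refine le_trans (le_of_eq (setLIntegral_congr_fun measurableSet_Ioi ?_)) (lint_exp_abs u)
      intro x hx
      beta_reduce
      rw [abs_of_pos (show 0 < x + u from add_pos hx hu)]
    calc _ ≤ (2:ℝ≥0∞) + 2 := add_le_add b1 b2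
      _ = 4 := by norm_num
  have swap : ∫⁻ x in Ioi (0:ℝ), ∫⁻ u in Ioi (0:ℝ), E x u
      = ∫⁻ u in Ioi (0:ℝ), ∫⁻ x in Ioi (0:ℝ), E x u :=
    lintegral_lintegral_swap hEmeas.aemeasurable
  have hA : ∫⁻ u in Ioi (0:ℝ), ENNReal.ofReal |Φ u|
      = ENNReal.ofReal (∫ x in Ioi (0:ℝ), |Φ x|) := by
    rw [← ofReal_integral_eq_lintegral_ofReal hΦ.abs
      (Filter.Eventually.of_forall fun t => abs_nonneg _)]
  have hc12 : c1 * c2 = ENNReal.ofReal (1/2) := by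
    rw [hc1, hc2, ← ENNReal.ofReal_mul (by positivity)]
    congr 1
    have h2 : Real.sqrt 2 * Real.sqrt 2 = 2 := Real.mul_self_sqrt (by norm_num)
    have hπ : (0:ℝ) < Real.sqrt Real.pi := Real.sqrt_pos.2 Real.pi_pos
    have h2p : (0:ℝ) < Real.sqrt 2 := Real.sqrt_pos.2 (by norm_num)
    rw [Real.sqrt_mul (by norm_num : (0:ℝ) ≤ 2) Real.pi,
      Real.sqrt_div Real.pi_pos.le 2]
    field_simp
    nlinarith [h2, hπ, h2p]
  calc ∫⁻ x in Ioi (0:ℝ),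
      ENNReal.ofReal |fscConv Φ (fun t => Real.sqrt (Real.pi / 2) * Real.exp (-t)) x|
      ≤ ∫⁻ x in Ioi (0:ℝ), c1 * c2 * ∫⁻ u in Ioi (0:ℝ), E x u := lintegral_mono step1
    _ = c1 * c2 * ∫⁻ x in Ioi (0:ℝ), ∫⁻ u in Ioi (0:ℝ), E x u :=
        lintegral_const_mul' _ _ (ENNReal.mul_ne_top ENNReal.ofReal_ne_top ENNReal.ofReal_ne_top)
    _ = c1 * c2 * ∫⁻ u in Ioi (0:ℝ), ∫⁻ x in Ioi (0:ℝ), E x u := by rw [swap]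
    _ ≤ c1 * c2 * ∫⁻ u in Ioi (0:ℝ), ENNReal.ofReal |Φ u| * 4 := by
        refine mul_le_mul_right (setLIntegral_mono_ae ?_ ?_) _
        · fun_prop
        · exact Filter.Eventually.of_forall step2
    _ = c1 * c2 * (4 * ENNReal.ofReal (∫ x in Ioi (0:ℝ), |Φ x|)) := by
        rw [lintegral_mul_const' _ _ (by norm_num), hA, mul_comm _ (4:ℝ≥0∞)]
    _ = ENNReal.ofReal 2 * ENNReal.ofReal (∫ x in Ioi (0:ℝ), |Φ x|) := by
        rw [← mul_assoc, hc12]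
        congr 1
        rw [show (4:ℝ≥0∞) = ENNReal.ofReal 4 by norm_num [ENNReal.ofReal]]
        rw [← ENNReal.ofReal_mul (by norm_num)]
        norm_num


lemma sm_fscConv {Φ : ℝ → ℝ} (hΦm : Measurable Φ) {h : ℝ → ℝ} (hh : Measurable h) :
    StronglyMeasurable (fscConv Φ h) := by
  have inner : StronglyMeasurable fun p : ℝ × ℝ =>
      Φ p.2 * (h |p.1 - p.2| - h (p.1 + p.2)) := by
    refine Measurable.stronglyMeasurable ?_
    exact (hΦm.comp measurable_snd).mul
      (((hh.comp (measurable_fst.sub measurable_snd).abs)).sub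
        (hh.comp (measurable_fst.add measurable_snd)))
  have := inner.integral_prod_right' (ν := volume.restrict (Ioi 0))
  unfold fscConv
  exact stronglyMeasurable_const.mul this

lemma sm_gconv {g ξ : ℝ → ℝ} (hg : Measurable g) (hξ : Measurable ξ) :
    StronglyMeasurable (gconv g ξ) := by
  have inner : StronglyMeasurable fun q : (ℝ × ℝ) × ℝ =>
      phiKer q.1.1 q.2 q.1.2 * g q.2 * ξ q.1.2 := by
    refine Measurable.stronglyMeasurable ?_
    have hp : Measurable fun q : (ℝ × ℝ) × ℝ => phiKer q.1.1 q.2 q.1.2 :=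
      measurable_phiKer3
    exact (hp.mul (hg.comp measurable_snd)).mul
      (hξ.comp (measurable_snd.comp measurable_fst))
  have hJ : StronglyMeasurable fun p : ℝ × ℝ =>
      ∫ u in Ioi (0:ℝ), phiKer p.1 u p.2 * g u * ξ p.2 :=
    inner.integral_prod_right' (ν := volume.restrict (Ioi 0))
  have := hJ.integral_prod_right' (ν := volume.restrict (Ioi 0))
  unfold gconv
  exact stronglyMeasurable_const.mul this

lemma main_bound {β : ℝ} (hβ : β ∈ Set.Ioo (0 : ℝ) 1) {Φ ξ : ℝ → ℝ}
    (hΦm : Measurable Φ) (hΦ : IntegrableOn Φ (Ioi 0))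
    (hξm : Measurable ξ)
    (hξ : IntegrableOn (fun v => |ξ v| * K0 (β * v)) (Ioi 0)) :
    ∫⁻ x in Ioi (0:ℝ),
        ENNReal.ofReal
          |gconv (fscConv Φ (fun t => Real.sqrt (Real.pi / 2) * Real.exp (-t))) ξ x|
      ≤ ENNReal.ofReal (4 * (∫ x in Ioi (0:ℝ), |Φ x|) * ∫ v in Ioi (0:ℝ), |ξ v| * K0 (β * v)) := by
  obtain ⟨hβ0, hβ1⟩ := hβ
  set g : ℝ → ℝ := fscConv Φ (fun t => Real.sqrt (Real.pi / 2) * Real.exp (-t)) with hgdef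
  have hgm : Measurable g := by
    refine (sm_fscConv hΦm ?_).measurable
    exact (measurable_const.mul (Real.measurable_exp.comp measurable_neg))
  set A : ℝ := ∫ x in Ioi (0:ℝ), |Φ x| with hA
  set B : ℝ := ∫ v in Ioi (0:ℝ), |ξ v| * K0 (β * v) with hB
  have hA0 : 0 ≤ A := setIntegral_nonneg measurableSet_Ioi fun x _ => abs_nonneg _
  have hB0 : 0 ≤ B := setIntegral_nonneg measurableSet_Ioi fun v _ =>
    mul_nonneg (abs_nonneg _) (K0_nonneg _)
  set W : ℝ → ℝ → ℝ → ℝ≥0∞ := fun x v u =>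
    ENNReal.ofReal |phiKer x u v| * ENNReal.ofReal |g u| * ENNReal.ofReal |ξ v| with hW
  have hWm : Measurable fun q : (ℝ × ℝ) × ℝ => W q.1.1 q.1.2 q.2 := by
    rw [hW]
    have hp : Measurable fun q : (ℝ × ℝ) × ℝ => phiKer q.1.1 q.2 q.1.2 :=
      measurable_phiKer3
    exact ((hp.abs.ennreal_ofReal).mul
      ((hgm.comp measurable_snd).abs.ennreal_ofReal)).mul
      ((hξm.comp (measurable_snd.comp measurable_fst)).abs.ennreal_ofReal)
  -- pointwise bound
  have step1 : ∀ x : ℝ, ENNReal.ofReal |gconv g ξ x| ≤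
      ENNReal.ofReal (1/4) * ∫⁻ v in Ioi (0:ℝ), ∫⁻ u in Ioi (0:ℝ), W x v u := by
    intro x
    unfold gconv
    rw [abs_mul, ENNReal.ofReal_mul (abs_nonneg _), abs_of_nonneg (by norm_num : (0:ℝ) ≤ 1/4)]
    refine mul_le_mul_right ?_ _
    refine le_trans (ofReal_abs_integral_le _ _) (lintegral_mono fun v => ?_)
    refine le_trans (ofReal_abs_integral_le _ _) (lintegral_mono fun u => ?_)
    rw [hW, abs_mul, abs_mul, ENNReal.ofReal_mul (by positivity),
      ENNReal.ofReal_mul (abs_nonneg _)]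
  -- swaps
  have swap1 : ∫⁻ x in Ioi (0:ℝ), ∫⁻ v in Ioi (0:ℝ), ∫⁻ u in Ioi (0:ℝ), W x v u
      = ∫⁻ v in Ioi (0:ℝ), ∫⁻ x in Ioi (0:ℝ), ∫⁻ u in Ioi (0:ℝ), W x v u := by
    refine lintegral_lintegral_swap ?_
    exact (hWm.lintegral_prod_right' (ν := volume.restrict (Ioi 0))).aemeasurable
  have swap2 : ∀ v : ℝ, ∫⁻ x in Ioi (0:ℝ), ∫⁻ u in Ioi (0:ℝ), W x v u
      = ∫⁻ u in Ioi (0:ℝ), ∫⁻ x in Ioi (0:ℝ), W x v u := by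
    intro v
    refine lintegral_lintegral_swap ?_
    have : Measurable fun q : ℝ × ℝ => W q.1 v q.2 := by
      rw [hW]
      exact (((measurable_phiKer2v v).abs.ennreal_ofReal).mul
        ((hgm.comp measurable_snd).abs.ennreal_ofReal)).mul measurable_const
    exact this.aemeasurable
  -- per-v bound
  set C : ℝ≥0∞ := ENNReal.ofReal 2 * ENNReal.ofReal A * ENNReal.ofReal 8 with hC
  have hCne : C ≠ ⊤ := by
    rw [hC]
    exact ENNReal.mul_ne_top (ENNReal.mul_ne_top ENNReal.ofReal_ne_top ENNReal.ofReal_ne_top)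
      ENNReal.ofReal_ne_top
  have stepv : ∀ v ∈ Ioi (0:ℝ), ∫⁻ u in Ioi (0:ℝ), ∫⁻ x in Ioi (0:ℝ), W x v u
      ≤ ENNReal.ofReal (|ξ v| * K0 (β * v)) * C := by
    intro v hv
    have hv' : (0:ℝ) < v := hv
    have inner : ∀ u : ℝ, ∫⁻ x in Ioi (0:ℝ), W x v u ≤
        ENNReal.ofReal |g u| * (ENNReal.ofReal (8 * K0 v) * ENNReal.ofReal |ξ v|) := by
      intro u
      have : ∀ x, W x v u = ENNReal.ofReal |phiKer x u v|
          * (ENNReal.ofReal |g u| * ENNReal.ofReal |ξ v|) := by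
        intro x; rw [hW]; ring
      simp_rw [this]
      rw [lintegral_mul_const' _ _
        (ENNReal.mul_ne_top ENNReal.ofReal_ne_top ENNReal.ofReal_ne_top)]
      calc (∫⁻ x in Ioi (0:ℝ), ENNReal.ofReal |phiKer x u v|)
            * (ENNReal.ofReal |g u| * ENNReal.ofReal |ξ v|)
          ≤ ENNReal.ofReal (8 * K0 v) * (ENNReal.ofReal |g u| * ENNReal.ofReal |ξ v|) :=
            mul_le_mul_left (lint_phiKer hv' u) _
        _ = ENNReal.ofReal |g u| * (ENNReal.ofReal (8 * K0 v) * ENNReal.ofReal |ξ v|) := by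
            ring
    calc ∫⁻ u in Ioi (0:ℝ), ∫⁻ x in Ioi (0:ℝ), W x v u
        ≤ ∫⁻ u in Ioi (0:ℝ),
            ENNReal.ofReal |g u| * (ENNReal.ofReal (8 * K0 v) * ENNReal.ofReal |ξ v|) :=
          lintegral_mono fun u => inner u
      _ = (∫⁻ u in Ioi (0:ℝ), ENNReal.ofReal |g u|)
            * (ENNReal.ofReal (8 * K0 v) * ENNReal.ofReal |ξ v|) :=
          lintegral_mul_const' _ _
            (ENNReal.mul_ne_top ENNReal.ofReal_ne_top ENNReal.ofReal_ne_top)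
      _ ≤ (ENNReal.ofReal 2 * ENNReal.ofReal A)
            * (ENNReal.ofReal (8 * K0 v) * ENNReal.ofReal |ξ v|) :=
          mul_le_mul_left (g_lint hΦm hΦ) _
      _ ≤ (ENNReal.ofReal 2 * ENNReal.ofReal A)
            * (ENNReal.ofReal (8 * K0 (β * v)) * ENNReal.ofReal |ξ v|) := by
          refine mul_le_mul_right (mul_le_mul_left (ENNReal.ofReal_le_ofReal ?_) _) _
          have := K0_mono hβ0 hβ1.le hv'
          nlinarith
      _ = ENNReal.ofReal (|ξ v| * K0 (β * v)) * C := by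
          rw [hC, ENNReal.ofReal_mul (abs_nonneg _),
            ENNReal.ofReal_mul (by norm_num : (0:ℝ) ≤ 8)]
          ring
  -- B as lintegral
  have hBl : ∫⁻ v in Ioi (0:ℝ), ENNReal.ofReal (|ξ v| * K0 (β * v)) = ENNReal.ofReal B := by
    rw [hB, ofReal_integral_eq_lintegral_ofReal hξ
      (Filter.Eventually.of_forall fun v => mul_nonneg (abs_nonneg _) (K0_nonneg _))]
  calc ∫⁻ x in Ioi (0:ℝ), ENNReal.ofReal |gconv g ξ x|
      ≤ ∫⁻ x in Ioi (0:ℝ),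
          ENNReal.ofReal (1/4) * ∫⁻ v in Ioi (0:ℝ), ∫⁻ u in Ioi (0:ℝ), W x v u :=
        lintegral_mono step1
    _ = ENNReal.ofReal (1/4)
          * ∫⁻ x in Ioi (0:ℝ), ∫⁻ v in Ioi (0:ℝ), ∫⁻ u in Ioi (0:ℝ), W x v u :=
        lintegral_const_mul' _ _ ENNReal.ofReal_ne_top
    _ = ENNReal.ofReal (1/4)
          * ∫⁻ v in Ioi (0:ℝ), ∫⁻ x in Ioi (0:ℝ), ∫⁻ u in Ioi (0:ℝ), W x v u := by rw [swap1]
    _ = ENNReal.ofReal (1/4)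
          * ∫⁻ v in Ioi (0:ℝ), ∫⁻ u in Ioi (0:ℝ), ∫⁻ x in Ioi (0:ℝ), W x v u := by
        congr 1
        exact lintegral_congr fun v => swap2 v
    _ ≤ ENNReal.ofReal (1/4)
          * ∫⁻ v in Ioi (0:ℝ), ENNReal.ofReal (|ξ v| * K0 (β * v)) * C := by
        refine mul_le_mul_right (lintegral_mono_ae ?_) _
        filter_upwards [ae_restrict_mem measurableSet_Ioi] with v hv
        exact stepv v hv
    _ = ENNReal.ofReal (1/4) * (ENNReal.ofReal B * C) := by
        rw [lintegral_mul_const' _ _ hCne, hBl]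
    _ = ENNReal.ofReal (4 * A * B) := by
        rw [hC, ← ENNReal.ofReal_mul (by norm_num : (0:ℝ) ≤ 2),
          ← ENNReal.ofReal_mul (by positivity), ← ENNReal.ofReal_mul hB0,
          ← ENNReal.ofReal_mul (by norm_num : (0:ℝ) ≤ 1/4)]
        congr 1
        ring

theorem first_kind_solution_estimate (β : ℝ) (hβ : β ∈ Set.Ioo (0 : ℝ) 1) (Φ ξ : ℝ → ℝ)
    (hΦ : MeasureTheory.IntegrableOn Φ (Set.Ioi 0))
    (hξm : Measurable ξ)
    (hξ : MeasureTheory.IntegrableOn (fun v => |ξ v| * K0 (β * v)) (Set.Ioi 0)) :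
    MeasureTheory.IntegrableOn
      (gconv (fscConv Φ (fun t => Real.sqrt (Real.pi / 2) * Real.exp (-t))) ξ)
      (Set.Ioi 0) ∧
    (∫ x in Set.Ioi (0 : ℝ),
        |gconv (fscConv Φ (fun t => Real.sqrt (Real.pi / 2) * Real.exp (-t))) ξ x|) ≤
      4 * (∫ x in Set.Ioi (0 : ℝ), |Φ x|) * (∫ v in Set.Ioi (0 : ℝ), |ξ v| * K0 (β * v)) := by
  have hae : AEStronglyMeasurable Φ (volume.restrict (Ioi 0)) := hΦ.1
  set Φ' : ℝ → ℝ := hae.mk Φ with hΦ'def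
  have hΦ'm : Measurable Φ' := hae.stronglyMeasurable_mk.measurable
  have heq : Φ =ᵐ[volume.restrict (Ioi 0)] Φ' := hae.ae_eq_mk
  have hΦ' : IntegrableOn Φ' (Ioi 0) := hΦ.congr heq
  have hgg : fscConv Φ (fun t => Real.sqrt (Real.pi / 2) * Real.exp (-t))
      = fscConv Φ' (fun t => Real.sqrt (Real.pi / 2) * Real.exp (-t)) := by
    funext x
    unfold fscConv
    congr 1
    exact integral_congr_ae (heq.mono fun u hu => by simp only [hu])
  have hAA : (∫ x in Ioi (0:ℝ), |Φ x|) = ∫ x in Ioi (0:ℝ), |Φ' x| :=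
    integral_congr_ae (heq.mono fun u hu => by simp only [hu])
  rw [hgg, hAA]
  set g : ℝ → ℝ := fscConv Φ' (fun t => Real.sqrt (Real.pi / 2) * Real.exp (-t)) with hgdef
  have hgm : Measurable g :=
    (sm_fscConv hΦ'm (measurable_const.mul (Real.measurable_exp.comp measurable_neg))).measurable
  have hfm : StronglyMeasurable (gconv g ξ) := sm_gconv hgm hξm
  have hmain := main_bound hβ hΦ'm hΦ' hξm hξ
  rw [← hgdef] at hmain
  set A : ℝ := ∫ x in Ioi (0:ℝ), |Φ' x| with hA
  set B : ℝ := ∫ v in Ioi (0:ℝ), |ξ v| * K0 (β * v) with hB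
  have hA0 : 0 ≤ A := setIntegral_nonneg measurableSet_Ioi fun x _ => abs_nonneg _
  have hB0 : 0 ≤ B := setIntegral_nonneg measurableSet_Ioi fun v _ =>
    mul_nonneg (abs_nonneg _) (K0_nonneg _)
  have hnn : ∫⁻ x in Ioi (0:ℝ), ‖gconv g ξ x‖ₑ
      = ∫⁻ x in Ioi (0:ℝ), ENNReal.ofReal |gconv g ξ x| := by
    simp_rw [Real.enorm_eq_ofReal_abs]
  have hint : IntegrableOn (gconv g ξ) (Ioi 0) := by
    refine ⟨hfm.aestronglyMeasurable, ?_⟩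
    rw [HasFiniteIntegral, hnn]
    exact lt_of_le_of_lt hmain ENNReal.ofReal_lt_top
  refine ⟨hint, ?_⟩
  have habs : (∫ x in Ioi (0:ℝ), |gconv g ξ x|) = ∫ x in Ioi (0:ℝ), ‖gconv g ξ x‖ := by
    simp_rw [Real.norm_eq_abs]
  rw [habs, integral_norm_eq_lintegral_enorm hfm.aestronglyMeasurable.restrict, hnn]
  calc (∫⁻ x in Ioi (0:ℝ), ENNReal.ofReal |gconv g ξ x|).toReal
      ≤ (ENNReal.ofReal (4 * A * B)).toReal :=
        ENNReal.toReal_mono ENNReal.ofReal_ne_top hmain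
    _ = 4 * A * B := ENNReal.toReal_ofReal (by positivity)
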